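/- The d-dimensional generalized grey Brownian motion B^{β,α} is α/2 self-similar in distribution: for any a > 0, the finite-dimensional characteristic functions of (B^{β,α}(a t_1), …, B^{β,α}(a t_n)) and (a^{α/2} B^{β,α}(t_1), …, a^{α/2} B^{β,α}(t_n)) coincide. -/

import Mathlib

open MeasureTheory Finset

/-- The Mittag-Leffler function `E_β(z) = ∑ zⁿ/Γ(βn+1)` (complex version). -/
noncomputable def mittagLeffler (β : ℝ) (z : ℂ) : ℂ :=
  ∑' n : ℕ, z ^ n / Complex.Gamma ((β * n + 1 : ℝ) : ℂ)

/-- The `d`-dimensional generalized grey Brownian motion is `α/2` self-similar in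
distribution: if `B : ℝ → Ω → (Fin d → ℝ)` is a process on a probability space whose
finite-dimensional characteristic functions are given by the Mittag-Leffler functional
`E_β(-½ ∑ᵢ |∑ⱼ kⱼᵢ η(tⱼ)|²)` where `η t = M_-^{α/2}1_{[0,t)}` satisfies the fBm covariance
identity, then the finite-dimensional characteristic functions of `(B(a t₁),…,B(a tₙ))` and
`(a^{α/2} B(t₁),…,a^{α/2} B(tₙ))` coincide. -/
theorem ggBm_self_similar
    {Ω : Type*} [MeasurableSpace Ω] (μ : Measure Ω) [IsProbabilityMeasure μ]
    {H : Type*} [NormedAddCommGroup H] [InnerProductSpace ℝ H]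
    (d : ℕ) (β α : ℝ) (hβ₀ : 0 < β) (hβ₁ : β ≤ 1) (hα₀ : 0 < α) (hα₂ : α < 2)
    (η : ℝ → H)
    (hcov : ∀ t s : ℝ, 0 ≤ t → 0 ≤ s →
      (inner ℝ (η t) (η s) : ℝ) = (1 / 2) * (t ^ α + s ^ α - |t - s| ^ α))
    (B : ℝ → Ω → Fin d → ℝ)
    (hchar : ∀ (n : ℕ) (t : Fin n → ℝ), (∀ j, 0 ≤ t j) → ∀ k : Fin n → Fin d → ℝ,
      ∫ w, Complex.exp (Complex.I * ((∑ j, ∑ i, k j i * B (t j) w i : ℝ) : ℂ)) ∂μ =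
        mittagLeffler β
          (-(((1 / 2) * ∑ i : Fin d, ‖∑ j, k j i • η (t j)‖ ^ 2 : ℝ) : ℂ)))
    (a : ℝ) (ha : 0 < a) :
    ∀ (n : ℕ) (t : Fin n → ℝ), (∀ j, 0 ≤ t j) → ∀ k : Fin n → Fin d → ℝ,
      ∫ w, Complex.exp (Complex.I * ((∑ j, ∑ i, k j i * B (a * t j) w i : ℝ) : ℂ)) ∂μ =
      ∫ w, Complex.exp
          (Complex.I * ((∑ j, ∑ i, k j i * (a ^ (α / 2) * B (t j) w i) : ℝ) : ℂ)) ∂μ := by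
  intro n t ht k
  have hat : ∀ j, 0 ≤ a * t j := fun j => mul_nonneg ha.le (ht j)
  have hpos : (0 : ℝ) < a ^ (α / 2) := Real.rpow_pos_of_pos ha _
  have hsq : a ^ (α / 2) * a ^ (α / 2) = a ^ α := by
    rw [← Real.rpow_add ha]; norm_num
  -- covariance scaling
  have hcov' : ∀ s u : ℝ, 0 ≤ s → 0 ≤ u →
      (inner ℝ (η (a * s)) (η (a * u)) : ℝ) = a ^ α * inner ℝ (η s) (η u) := by
    intro s u hs hu
    rw [hcov _ _ (mul_nonneg ha.le hs) (mul_nonneg ha.le hu), hcov _ _ hs hu,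
      Real.mul_rpow ha.le hs, Real.mul_rpow ha.le hu]
    have habs : |a * s - a * u| = a * |s - u| := by
      rw [← mul_sub, abs_mul, abs_of_pos ha]
    rw [habs, Real.mul_rpow ha.le (abs_nonneg _)]
    ring
  -- norm scaling
  have hnorm : ∀ c : Fin n → ℝ,
      ‖∑ j, c j • η (a * t j)‖ ^ 2 = a ^ α * ‖∑ j, c j • η (t j)‖ ^ 2 := by
    intro c
    rw [← real_inner_self_eq_norm_sq, ← real_inner_self_eq_norm_sq, sum_inner, sum_inner]
    rw [Finset.mul_sum]
    refine Finset.sum_congr rfl fun j _ => ?_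
    rw [inner_sum, inner_sum, Finset.mul_sum]
    refine Finset.sum_congr rfl fun j' _ => ?_
    rw [real_inner_smul_left, real_inner_smul_right, real_inner_smul_left,
      real_inner_smul_right, hcov' _ _ (ht j) (ht j')]
    ring
  have hrhs : ∀ w : Ω, (∑ j, ∑ i, k j i * (a ^ (α / 2) * B (t j) w i) : ℝ)
      = ∑ j, ∑ i, (a ^ (α / 2) * k j i) * B (t j) w i := by
    intro w
    refine Finset.sum_congr rfl fun j _ => Finset.sum_congr rfl fun i _ => by ring
  simp_rw [hrhs]
  rw [hchar n (fun j => a * t j) hat k,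
    hchar n t ht (fun j i => a ^ (α / 2) * k j i)]
  have hkey : (1 / 2 * ∑ i : Fin d, ‖∑ j, k j i • η (a * t j)‖ ^ 2 : ℝ)
      = 1 / 2 * ∑ i : Fin d, ‖∑ j, (a ^ (α / 2) * k j i) • η (t j)‖ ^ 2 := by
    congr 1
    refine Finset.sum_congr rfl fun i _ => ?_
    have hsm : (∑ j, (a ^ (α / 2) * k j i) • η (t j)) = a ^ (α / 2) • ∑ j, k j i • η (t j) := by
      rw [Finset.smul_sum]
      exact Finset.sum_congr rfl fun j _ => (smul_smul _ _ _).symm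
    rw [hnorm (fun j => k j i), hsm, norm_smul, Real.norm_eq_abs, abs_of_pos hpos,
      mul_pow]
    rw [← hsq]; ring
  rw [hkey]
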